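/- Let G be a finite abelian group, k a positive integer, and x ∈ S(G). If ‖x‖_∞ = 1/k and ‖V²x‖_∞ = 1/k (where V² = V ∘ V), then there exist a subgroup H ≤ G with |H| = k and an element p ∈ G such that x is the uniform distribution on the coset p + H, i.e. x(g) = 1/k for g ∈ p + H and x(g) = 0 otherwise; moreover Vx is then the uniform distribution on the coset 2p + H. In particular, every periodic point of V whose sup-norm equals 1/k is a uniform distribution on a coset of a subgroup of order k. -/

import Mathlib

open Finset

/- The quadratic stochastic operator (convolution square) on a finite abelian group:
`(Vx)(h) = ∑_{f,g ∈ G, f+g=h} x(f)·x(g)`. -/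
open Classical in
noncomputable def QSO {G : Type*} [AddCommGroup G] [Fintype G] (x : G → ℝ) : G → ℝ :=
  fun h => ∑ p ∈ Finset.univ.filter (fun p : G × G => p.1 + p.2 = h), x p.1 * x p.2

section helpers
variable {G : Type*} [AddCommGroup G] [Fintype G]

lemma QSO_apply (x : G → ℝ) (h : G) : QSO x h = ∑ f, x f * x (h - f) := by
  unfold QSO
  rw [Finset.sum_filter, Fintype.sum_prod_type]
  refine Finset.sum_congr rfl fun f _ => ?_
  rw [Finset.sum_eq_single (h - f)]
  · simp
  · intro g _ hg
    rw [if_neg]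
    intro hc
    exact hg (by rw [← hc]; abel)
  · simp

lemma QSO_nonneg {x : G → ℝ} (hx : ∀ g, 0 ≤ x g) : ∀ h, 0 ≤ QSO x h := fun h => by
  rw [QSO_apply]; exact Finset.sum_nonneg fun f _ => mul_nonneg (hx f) (hx _)

lemma QSO_sum {x : G → ℝ} (hx : ∑ g, x g = 1) : ∑ h, QSO x h = 1 := by
  simp_rw [QSO_apply]
  rw [Finset.sum_comm]
  have : ∀ f : G, ∑ h, x f * x (h - f) = x f := by
    intro f
    rw [← Finset.mul_sum]
    have := Equiv.sum_comp (Equiv.subRight f) x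
    simp only [Equiv.subRight_apply] at this
    rw [this, hx, mul_one]
  simp_rw [this, hx]

lemma QSO_le {x : G → ℝ} {c : ℝ} (hx : ∀ g, 0 ≤ x g) (hs : ∑ g, x g = 1)
    (hle : ∀ g, x g ≤ c) : ∀ h, QSO x h ≤ c := fun h => by
  rw [QSO_apply]
  calc ∑ f, x f * x (h - f) ≤ ∑ f, x f * c :=
        Finset.sum_le_sum fun f _ => mul_le_mul_of_nonneg_left (hle _) (hx f)
    _ = c := by rw [← Finset.sum_mul, hs, one_mul]

lemma exists_norm_eq_abs (f : G → ℝ) : ∃ g, ‖f‖ = |f g| := by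
  obtain ⟨g, -, hg⟩ := Finset.exists_max_image univ (fun g => |f g|) ⟨0, mem_univ 0⟩
  refine ⟨g, le_antisymm ?_ ?_⟩
  · refine pi_norm_le_iff_of_nonneg (abs_nonneg _) |>.2 fun i => ?_
    simpa [Real.norm_eq_abs] using hg i (mem_univ i)
  · simpa [Real.norm_eq_abs] using norm_le_pi_norm f g

omit [AddCommGroup G] in
lemma eq_max_of_support {y w : G → ℝ} {M : ℝ} (hy : ∀ g, 0 ≤ y g) (hs : ∑ g, y g = 1)
    (hw : ∀ g, w g ≤ M) (he : ∑ g, y g * w g = M) : ∀ g, y g ≠ 0 → w g = M := by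
  have h0 : ∑ g, y g * (M - w g) = 0 := by
    simp_rw [mul_sub]
    rw [Finset.sum_sub_distrib, ← Finset.sum_mul, hs, one_mul, he, sub_self]
  intro g hg
  have := (Finset.sum_eq_zero_iff_of_nonneg
    (fun i _ => mul_nonneg (hy i) (sub_nonneg.2 (hw i)))).1 h0 g (mem_univ g)
  rcases mul_eq_zero.1 this with h | h
  · exact absurd h hg
  · linarith

omit [AddCommGroup G] in
lemma exists_ne_zero_of_sum_one {y : G → ℝ} (hs : ∑ g, y g = 1) : ∃ g, y g ≠ 0 := by
  by_contra hc
  push_neg at hc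
  rw [Finset.sum_eq_zero (fun g _ => hc g)] at hs
  exact one_ne_zero hs.symm

end helpers

/-- If `x ∈ S(G)` has `‖x‖_∞ = 1/k` and `‖V²x‖_∞ = 1/k`, then there exist a subgroup
`H ≤ G` of order `k` and a point `p ∈ G` such that `x` is the uniform distribution on
the coset `p + H` (i.e. `x g = 1/k` iff `g - p ∈ H`, else `0`), and moreover `Vx` is
the uniform distribution on the coset `2p + H`. -/
theorem extremal_norm_implies_coset {G : Type*} [AddCommGroup G] [Fintype G]
    (k : ℕ) (hk : 0 < k) (x : G → ℝ)
    (hx_nonneg : ∀ g, 0 ≤ x g) (hx_sum : ∑ g, x g = 1)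
    (hx_norm : ‖x‖ = 1 / (k : ℝ)) (hV2x_norm : ‖QSO (QSO x)‖ = 1 / (k : ℝ)) :
    ∃ (H : AddSubgroup G) (p : G), Nat.card H = k ∧
      (∀ g, g - p ∈ H → x g = 1 / (k : ℝ)) ∧ (∀ g, g - p ∉ H → x g = 0) ∧
      (∀ g, g - (p + p) ∈ H → QSO x g = 1 / (k : ℝ)) ∧
      (∀ g, g - (p + p) ∉ H → QSO x g = 0) := by
  classical
  set c : ℝ := 1 / (k : ℝ) with hc_def
  have hkR : (0:ℝ) < k := Nat.cast_pos.2 hk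
  have hc : 0 < c := by positivity
  -- pointwise bound on x
  have hxle : ∀ g, x g ≤ c := fun g => by
    calc x g ≤ |x g| := le_abs_self _
      _ ≤ ‖x‖ := by simpa [Real.norm_eq_abs] using norm_le_pi_norm x g
      _ = c := hx_norm
  -- facts about Vx
  have hVnn : ∀ h, 0 ≤ QSO x h := QSO_nonneg hx_nonneg
  have hVsum : ∑ h, QSO x h = 1 := QSO_sum hx_sum
  have hVle : ∀ h, QSO x h ≤ c := QSO_le hx_nonneg hx_sum hxle
  -- V²x attains its norm
  obtain ⟨h₁, hh₁⟩ := exists_norm_eq_abs (QSO (QSO x))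
  have hV2h₁ : QSO (QSO x) h₁ = c := by
    have := QSO_nonneg hVnn h₁
    rw [hV2x_norm] at hh₁
    rw [abs_of_nonneg this] at hh₁
    exact hh₁.symm
  -- equality transfer at level 2
  have E_V : ∀ d, QSO x d ≠ 0 → QSO x (h₁ - d) = c := by
    have := QSO_apply (QSO x) h₁
    rw [hV2h₁] at this
    exact eq_max_of_support (w := fun d => QSO x (h₁ - d)) hVnn hVsum
      (fun d => hVle _) this.symm
  -- some point where Vx is positive, giving a max point h₀ of Vx
  obtain ⟨d₀, hd₀⟩ := exists_ne_zero_of_sum_one hVsum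
  set h₀ : G := h₁ - d₀ with hh₀def
  have hVh₀ : QSO x h₀ = c := E_V d₀ hd₀
  -- equality transfer at level 1: for any d with Vx d = c
  have E1 : ∀ d, QSO x d = c → ∀ f, x f ≠ 0 → x (d - f) = c := by
    intro d hd
    have := QSO_apply x d
    rw [hd] at this
    exact eq_max_of_support (w := fun f => x (d - f)) hx_nonneg hx_sum
      (fun f => hxle _) this.symm
  -- support of x
  set A : Finset G := univ.filter (fun g => x g ≠ 0) with hA_def
  have hmemA : ∀ g, g ∈ A ↔ x g ≠ 0 := fun g => by simp [hA_def]
  -- x equals c on its support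
  have E2 : ∀ g, x g ≠ 0 → x g = c := by
    set B : Finset G := univ.filter (fun g => x g = c) with hB_def
    have hBA : B ⊆ A := fun g hg => by
      rw [hmemA]
      simp only [hB_def, mem_filter] at hg
      rw [hg.2]; exact ne_of_gt hc
    have hcard : A.card ≤ B.card := by
      refine Finset.card_le_card_of_injOn (fun f => h₀ - f) (fun f hf => ?_) ?_
      · simp only [hB_def, mem_filter]
        exact Finset.mem_filter.2 ⟨mem_univ _, E1 h₀ hVh₀ f ((hmemA f).1 hf)⟩
      · intro a _ b _ hab
        exact sub_right_injective hab
    have : A = B := (Finset.eq_of_subset_of_card_le hBA hcard).symm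
    intro g hg
    have := this ▸ (hmemA g).2 hg
    simp only [hB_def, mem_filter] at this
    exact this.2
  -- cardinality of support is k
  have hAsum : ∑ g ∈ A, x g = 1 := by
    rw [← hx_sum]
    refine Finset.sum_subset (Finset.subset_univ A) ?_
    intro g _ hg
    by_contra hne
    exact hg ((hmemA g).2 hne)
  have hAcard : (A.card : ℝ) = k := by
    have : ∑ g ∈ A, x g = A.card * c := by
      rw [Finset.sum_congr rfl (fun g hg => E2 g ((hmemA g).1 hg))]
      simp [mul_comm]
    rw [hAsum, hc_def] at this
    field_simp at this
    exact_mod_cast this.symm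
  have hAcardk : A.card = k := by exact_mod_cast hAcard
  -- backward characterization: Vx d = c when d - A ⊆ A
  have Vmax_of : ∀ d, (∀ f, x f ≠ 0 → x (d - f) ≠ 0) → QSO x d = c := by
    intro d hd
    rw [QSO_apply]
    have hsplit : ∑ f, x f * x (d - f) = ∑ f ∈ A, x f * x (d - f) := by
      refine (Finset.sum_subset (Finset.subset_univ A) ?_).symm
      intro g _ hg
      have : x g = 0 := by
        by_contra hne; exact hg ((hmemA g).2 hne)
      rw [this, zero_mul]
    rw [hsplit, Finset.sum_congr rfl
      (fun f hf => by rw [E2 f ((hmemA f).1 hf), E2 _ (hd f ((hmemA f).1 hf))]),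
      Finset.sum_const, hAcardk]
    simp only [nsmul_eq_mul, hc_def]
    field_simp
  -- Vx positive on sums of support elements
  have hVpos : ∀ a₁ a₂, x a₁ ≠ 0 → x a₂ ≠ 0 → QSO x (a₁ + a₂) ≠ 0 := by
    intro a₁ a₂ h1 h2
    have hterm : x a₁ * x (a₁ + a₂ - a₁) = x a₁ * x a₂ := by rw [add_sub_cancel_left]
    have : x a₁ * x a₂ ≤ QSO x (a₁ + a₂) := by
      rw [QSO_apply]
      calc x a₁ * x a₂ = x a₁ * x (a₁ + a₂ - a₁) := hterm.symm
        _ ≤ ∑ f, x f * x (a₁ + a₂ - f) :=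
          Finset.single_le_sum (fun f _ => mul_nonneg (hx_nonneg f) (hx_nonneg _)) (mem_univ a₁)
    have hpos : 0 < x a₁ * x a₂ :=
      mul_pos ((hx_nonneg a₁).lt_of_ne (Ne.symm h1)) ((hx_nonneg a₂).lt_of_ne (Ne.symm h2))
    exact ne_of_gt (lt_of_lt_of_le hpos this)
  -- the key triple property
  have triple : ∀ a₁ a₂ a₃, x a₁ ≠ 0 → x a₂ ≠ 0 → x a₃ ≠ 0 →
      x (h₁ - a₁ - a₂ - a₃) ≠ 0 := by
    intro a₁ a₂ a₃ h1 h2 h3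
    have hV : QSO x (h₁ - (a₁ + a₂)) = c := E_V _ (hVpos a₁ a₂ h1 h2)
    have := E1 _ hV a₃ h3
    have heq : h₁ - (a₁ + a₂) - a₃ = h₁ - a₁ - a₂ - a₃ := by abel
    rw [heq] at this
    rw [this]
    exact ne_of_gt hc
  -- pick a base point of the support
  obtain ⟨a₀, ha₀⟩ := exists_ne_zero_of_sum_one hx_sum
  -- the prospective subgroup as a predicate
  set P : G → Prop := fun g => x (a₀ + g) ≠ 0 with hP_def
  have hP0 : P 0 := by simpa [hP_def] using ha₀
  set t : G := h₁ - a₀ - a₀ - a₀ - a₀ with ht_def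
  have hkey : ∀ u v, P u → P v → P (t - u - v) := by
    intro u v hu hv
    have := triple (a₀ + u) (a₀ + v) a₀ hu hv ha₀
    have heq : h₁ - (a₀ + u) - (a₀ + v) - a₀ = a₀ + (t - u - v) := by
      rw [ht_def]; abel
    rw [heq] at this
    exact this
  have hPt : ∀ u, P u → P (t - u) := fun u hu => by
    have := hkey u 0 hu hP0
    rwa [sub_zero] at this
  -- surjectivity of u ↦ t - u on the finite set of P
  set HF : Finset G := univ.filter P with hHF_def
  have hmemHF : ∀ g, g ∈ HF ↔ P g := fun g => by simp [hHF_def]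
  have hsurj : ∀ s, P s → ∃ u, P u ∧ t - u = s := by
    have himage : HF.image (fun u => t - u) = HF := by
      apply Finset.eq_of_subset_of_card_le
      · intro g hg
        obtain ⟨u, hu, rfl⟩ := Finset.mem_image.1 hg
        exact (hmemHF _).2 (hPt u ((hmemHF u).1 hu))
      · rw [Finset.card_image_of_injective _ sub_right_injective]
    intro s hs
    have : s ∈ HF.image (fun u => t - u) := by rw [himage]; exact (hmemHF s).2 hs
    obtain ⟨u, hu, huv⟩ := Finset.mem_image.1 this
    exact ⟨u, (hmemHF u).1 hu, huv⟩
  have hsub_mem : ∀ u v, P u → P v → P (u - v) := by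
    intro u v hu hv
    obtain ⟨w, hw, rfl⟩ := hsurj u hu
    exact hkey w v hw hv
  -- build the subgroup
  have hneg_mem : ∀ u, P u → P (-u) := fun u hu => by
    simpa using hsub_mem 0 u hP0 hu
  have hadd_mem : ∀ u v, P u → P v → P (u + v) := fun u v hu hv => by
    simpa [sub_neg_eq_add] using hsub_mem u (-v) hu (hneg_mem v hv)
  set H : AddSubgroup G :=
    { carrier := {g | P g}
      zero_mem' := hP0
      add_mem' := fun hu hv => hadd_mem _ _ hu hv
      neg_mem' := fun hu => hneg_mem _ hu } with hH_def
  have hmemH : ∀ g, g ∈ H ↔ P g := fun g => Iff.rfl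
  refine ⟨H, a₀, ?_, ?_, ?_, ?_, ?_⟩
  · -- cardinality
    have h1 : Nat.card H = ((H : Set G)).ncard := rfl
    have h2 : (H : Set G) = ↑HF := by
      ext g
      simp [hmemHF, hmemH]
    rw [h1, h2, Set.ncard_coe_finset]
    -- HF.card = A.card = k
    have : HF.card = A.card := by
      refine Finset.card_bij (fun g _ => a₀ + g) ?_ ?_ ?_
      · intro g hg
        exact (hmemA _).2 ((hmemHF g).1 hg)
      · intro a _ b _ hab
        exact add_right_injective a₀ hab
      · intro b hb
        refine ⟨b - a₀, (hmemHF _).2 ?_, ?_⟩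
        swap
        · show a₀ + (b - a₀) = b
          abel
        show x (a₀ + (b - a₀)) ≠ 0
        rw [show a₀ + (b - a₀) = b by abel]
        exact (hmemA b).1 hb
    rw [this, hAcardk]
  · intro g hg
    have : x (a₀ + (g - a₀)) ≠ 0 := (hmemH _).1 hg
    rw [show a₀ + (g - a₀) = g by abel] at this
    exact E2 g this
  · intro g hg
    by_contra hne
    apply hg
    rw [hmemH]
    show x (a₀ + (g - a₀)) ≠ 0
    rw [show a₀ + (g - a₀) = g by abel]
    exact hne
  · intro g hg
    refine Vmax_of g (fun f hf => ?_)
    have hfH : f - a₀ ∈ H := by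
      rw [hmemH]
      show x (a₀ + (f - a₀)) ≠ 0
      rwa [show a₀ + (f - a₀) = f by abel]
    have : (g - (a₀ + a₀)) - (f - a₀) ∈ H := H.sub_mem hg hfH
    have h3 : x (a₀ + ((g - (a₀ + a₀)) - (f - a₀))) ≠ 0 := (hmemH _).1 this
    rwa [show a₀ + ((g - (a₀ + a₀)) - (f - a₀)) = g - f by abel] at h3
  · intro g hg
    rw [QSO_apply]
    refine Finset.sum_eq_zero (fun f _ => ?_)
    by_cases hf : x f = 0
    · rw [hf, zero_mul]
    · by_cases hgf : x (g - f) = 0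
      · rw [hgf, mul_zero]
      · exfalso
        apply hg
        have hfH : f - a₀ ∈ H := by
          rw [hmemH]; show x (a₀ + (f - a₀)) ≠ 0
          rwa [show a₀ + (f - a₀) = f by abel]
        have hgfH : g - f - a₀ ∈ H := by
          rw [hmemH]; show x (a₀ + (g - f - a₀)) ≠ 0
          rwa [show a₀ + (g - f - a₀) = g - f by abel]
        have := H.add_mem hfH hgfH
        rwa [show (f - a₀) + (g - f - a₀) = g - (a₀ + a₀) by abel] at this
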